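/- arXiv:1508.06754 — 5 statements merged into one kernel-verified Lean document; each statement's English description precedes it below -/
import Mathlib

section
/- For every N ≥ 2, the word 0100·∏_{n=2}^{N}(f_{n-1}·f_n·f_{n-1}) is a prefix of the Fibonacci infinite word f. In other words, f = 0100·∏_{n≥2} f_{n-1} f_n f_{n-1}. -/
/-- The finite Fibonacci words over the alphabet {0,1}: f 1 = 1, f 2 = 0,
and f n = f (n-1) ++ f (n-2) for n ≥ 3. -/
def fibWord : ℕ → List ℕ
  | 0 => []
  | 1 => [1]
  | 2 => [0]
  | n + 3 => fibWord (n + 2) ++ fibWord (n + 1)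

/-- A finite word is a prefix of the Fibonacci infinite word iff it is a
prefix of some finite Fibonacci word f m with m ≥ 2. -/
def IsFibPrefix (x : List ℕ) : Prop := ∃ m, 2 ≤ m ∧ x <+: fibWord m

lemma fibWord_succ_succ (n : ℕ) (hn : 1 ≤ n) :
    fibWord (n + 2) = fibWord (n + 1) ++ fibWord n := by
  obtain ⟨m, rfl⟩ := Nat.exists_eq_add_of_le' hn
  rfl

lemma key (N : ℕ) (hN : 2 ≤ N) :
    ([0, 1, 0, 0] ++
      ((List.range (N - 1)).map
        (fun i => fibWord (i + 1) ++ fibWord (i + 2) ++ fibWord (i + 1))).flatten)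
      = fibWord (N + 3) ++ fibWord (N + 1) := by
  induction N, hN using Nat.le_induction with
  | base => decide
  | succ N hN ih =>
    have h1 : N + 1 - 1 = (N - 1) + 1 := by omega
    rw [h1, List.range_succ, List.map_append, List.flatten_append, ← List.append_assoc, ih]
    have h2 : N - 1 + 1 = N := by omega
    have h3 : N - 1 + 2 = N + 1 := by omega
    simp only [List.map_cons, List.map_nil, List.flatten_cons, List.flatten_nil,
      List.append_nil, h2, h3]
    have e1 : fibWord (N + 2) = fibWord (N + 1) ++ fibWord N :=
      fibWord_succ_succ N (by omega)
    have e2 : fibWord (N + 1 + 3) = fibWord (N + 3) ++ fibWord (N + 2) := rfl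
    rw [e2, e1]
    simp [List.append_assoc]

theorem stmt2 (N : ℕ) (hN : 2 ≤ N) :
    IsFibPrefix ([0, 1, 0, 0] ++
      ((List.range (N - 1)).map
        (fun i => fibWord (i + 1) ++ fibWord (i + 2) ++ fibWord (i + 1))).flatten) := by
  refine ⟨N + 4, by omega, ?_⟩
  rw [key N hN]
  have e : fibWord (N + 4) = fibWord (N + 3) ++ fibWord (N + 2) := rfl
  rw [e]
  refine ⟨fibWord N, ?_⟩
  rw [fibWord_succ_succ N (by omega), List.append_assoc]
end

section
/- For every n ≥ 2 one has c_{2n+1} = c_{2n}·c_{2n-1} and c_{2n+2} = c_{2n}·c_{2n+1}, and consequently for the reversals, rev(c_{2n+1}) = rev(c_{2n-1})·rev(c_{2n}) and rev(c_{2n+2}) = rev(c_{2n+1})·rev(c_{2n}). -/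
/-- The central word p n: the Fibonacci word f n with its last two letters removed. -/
def centralWord (n : ℕ) : List ℕ := (fibWord n).dropLast.dropLast

/-- The lower Christoffel word c n = 0 · p n · 1, for n ≥ 3. -/
def chrisWord (n : ℕ) : List ℕ := [0] ++ centralWord n ++ [1]

private lemma dl2 (w : List ℕ) (a b : ℕ) : (w ++ [a, b]).dropLast.dropLast = w := by
  have : w ++ [a, b] = (w ++ [a]) ++ [b] := by simp
  rw [this, List.dropLast_concat, List.dropLast_concat]

private lemma ends : ∀ k,
    (fibWord (2 * k + 3) = centralWord (2 * k + 3) ++ [0, 1] ∧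
     fibWord (2 * k + 4) = centralWord (2 * k + 4) ++ [1, 0]) := by
  intro k
  induction k with
  | zero => constructor <;> rfl
  | succ m ih =>
    obtain ⟨h1, h2⟩ := ih
    have e1 : fibWord (2 * m + 5) = fibWord (2 * m + 4) ++ fibWord (2 * m + 3) := rfl
    have e2 : fibWord (2 * m + 6) = fibWord (2 * m + 5) ++ fibWord (2 * m + 4) := rfl
    have c1 : centralWord (2 * m + 5) = fibWord (2 * m + 4) ++ centralWord (2 * m + 3) := by
      show (fibWord (2 * m + 5)).dropLast.dropLast = _
      rw [e1, h1, ← List.append_assoc, dl2]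
    have c2 : centralWord (2 * m + 6) = fibWord (2 * m + 5) ++ centralWord (2 * m + 4) := by
      show (fibWord (2 * m + 6)).dropLast.dropLast = _
      rw [e2, h2, ← List.append_assoc, dl2]
    constructor
    · show fibWord (2 * m + 5) = centralWord (2 * m + 5) ++ [0, 1]
      rw [c1, e1, h1, List.append_assoc]
    · show fibWord (2 * m + 6) = centralWord (2 * m + 6) ++ [1, 0]
      rw [c2, e2, h2, List.append_assoc]

private lemma ends2 (k : ℕ) :
    fibWord (k + 3) = centralWord (k + 3) ++ [0, 1] ∨
    fibWord (k + 3) = centralWord (k + 3) ++ [1, 0] := by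
  rcases Nat.even_or_odd k with ⟨m, hm⟩ | ⟨m, hm⟩
  · left; have : k + 3 = 2 * m + 3 := by omega
    rw [this]; exact (ends m).1
  · right; have : k + 3 = 2 * m + 4 := by omega
    rw [this]; exact (ends m).2

/-- p (k+5) = f (k+4) ++ p (k+3). -/
private lemma lemD (k : ℕ) :
    centralWord (k + 5) = fibWord (k + 4) ++ centralWord (k + 3) := by
  have e : fibWord (k + 5) = fibWord (k + 4) ++ fibWord (k + 3) := rfl
  show (fibWord (k + 5)).dropLast.dropLast = _
  rcases ends2 k with h | h <;>
    rw [e, h, ← List.append_assoc, dl2]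

/-- f (k+4) ++ p (k+3) = f (k+3) ++ p (k+4). -/
private lemma lemC : ∀ k, fibWord (k + 4) ++ centralWord (k + 3) =
    fibWord (k + 3) ++ centralWord (k + 4) := by
  intro k
  induction k with
  | zero => rfl
  | succ m ih =>
    have e : fibWord (m + 5) = fibWord (m + 4) ++ fibWord (m + 3) := rfl
    calc fibWord (m + 5) ++ centralWord (m + 4)
        = fibWord (m + 4) ++ (fibWord (m + 3) ++ centralWord (m + 4)) := by
          rw [e, List.append_assoc]
      _ = fibWord (m + 4) ++ (fibWord (m + 4) ++ centralWord (m + 3)) := by rw [← ih]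
      _ = fibWord (m + 4) ++ centralWord (m + 5) := by rw [← lemD]

theorem stmt10 (n : ℕ) (hn : 2 ≤ n) :
    chrisWord (2 * n + 1) = chrisWord (2 * n) ++ chrisWord (2 * n - 1) ∧
    chrisWord (2 * n + 2) = chrisWord (2 * n) ++ chrisWord (2 * n + 1) ∧
    (chrisWord (2 * n + 1)).reverse =
      (chrisWord (2 * n - 1)).reverse ++ (chrisWord (2 * n)).reverse ∧
    (chrisWord (2 * n + 2)).reverse =
      (chrisWord (2 * n + 1)).reverse ++ (chrisWord (2 * n)).reverse := by
  obtain ⟨m, rfl⟩ : ∃ m, n = m + 2 := ⟨n - 2, by omega⟩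
  have hev : fibWord (2 * m + 4) = centralWord (2 * m + 4) ++ [1, 0] := (ends m).2
  have hD1 : centralWord (2 * m + 5) = fibWord (2 * m + 4) ++ centralWord (2 * m + 3) :=
    lemD (2 * m)
  have hp1 : centralWord (2 * m + 5) =
      centralWord (2 * m + 4) ++ [1, 0] ++ centralWord (2 * m + 3) := by
    rw [hD1, hev]
  have hp2 : centralWord (2 * m + 6) =
      centralWord (2 * m + 4) ++ [1, 0] ++ centralWord (2 * m + 5) := by
    have hD : centralWord (2 * m + 6) = fibWord (2 * m + 5) ++ centralWord (2 * m + 4) := by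
      have h := lemD (2 * m + 1)
      rw [show 2 * m + 1 + 5 = 2 * m + 6 from by ring, show 2 * m + 1 + 4 = 2 * m + 5 from by ring,
        show 2 * m + 1 + 3 = 2 * m + 4 from by ring] at h
      exact h
    have e : fibWord (2 * m + 5) = fibWord (2 * m + 4) ++ fibWord (2 * m + 3) := rfl
    calc centralWord (2 * m + 6)
        = fibWord (2 * m + 4) ++ (fibWord (2 * m + 3) ++ centralWord (2 * m + 4)) := by
          rw [hD, e, List.append_assoc]
      _ = fibWord (2 * m + 4) ++ (fibWord (2 * m + 4) ++ centralWord (2 * m + 3)) := by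
          rw [← lemC (2 * m)]
      _ = fibWord (2 * m + 4) ++ centralWord (2 * m + 5) := by rw [← hD1]
      _ = centralWord (2 * m + 4) ++ [1, 0] ++ centralWord (2 * m + 5) := by
          rw [hev, List.append_assoc]
  simp only [show 2 * (m + 2) = 2 * m + 4 from by ring]
  simp only [show 2 * m + 4 + 1 = 2 * m + 5 from rfl, show 2 * m + 4 - 1 = 2 * m + 3 from rfl,
    show 2 * m + 4 + 2 = 2 * m + 6 from rfl]
  refine ⟨?_, ?_, ?_, ?_⟩ <;> simp only [chrisWord, hp1, hp2] <;> simp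
end

section
/- For every n ≥ 1 one has c_{2n+1} = f̂_{2n-1}·f̂_{2n} and c_{2n+2} = f̂_{2n+1}·f̂_{2n}, and consequently rev(c_{2n+1}) = f̂_{2n}·f̂_{2n-1} and rev(c_{2n+2}) = f̂_{2n}·f̂_{2n+1}. -/
/-- The left rotation of a word w₁⋯w_k is w_k w₁⋯w_{k-1}. -/
def leftRot (w : List ℕ) : List ℕ :=
  match w.getLast? with
  | none => []
  | some a => a :: w.dropLast

/-- The singular word f̂ n: the left rotation of f n with its first letter
complemented (0 and 1 exchanged). -/
def singWord (n : ℕ) : List ℕ :=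
  match leftRot (fibWord n) with
  | [] => []
  | a :: t => (1 - a) :: t

lemma fib_rec (n : ℕ) : fibWord (n+3) = fibWord (n+2) ++ fibWord (n+1) := rfl

lemma fib_ne_nil : ∀ n, 1 ≤ n → fibWord n ≠ []
  | 1, _ => by simp [fibWord]
  | 2, _ => by simp [fibWord]
  | (n+3), _ => by
      simp only [fibWord]
      exact fun h => fib_ne_nil (n+2) (by omega) (List.append_eq_nil_iff.mp h).1

lemma dl2_append (u v : List ℕ) (h : 2 ≤ v.length) :
    (u ++ v).dropLast.dropLast = u ++ v.dropLast.dropLast := by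
  have h1 : v ≠ [] := by intro hv; simp [hv] at h
  have h2 : v.dropLast ≠ [] := by
    intro hv
    have := congrArg List.length hv
    simp [List.length_dropLast] at this
    omega
  rw [List.dropLast_append_of_ne_nil (l' := u) h1, List.dropLast_append_of_ne_nil (l' := u) h2]

/-- last two letters -/
lemma lastTwo : ∀ m, fibWord (2*m+3) = centralWord (2*m+3) ++ [0,1] ∧
    fibWord (2*m+4) = centralWord (2*m+4) ++ [1,0] := by
  intro m
  induction m with
  | zero => constructor <;> rfl
  | succ k ih =>
    obtain ⟨h1, h2⟩ := ih
    have e1 : fibWord (2*(k+1)+3) = (fibWord (2*k+4) ++ centralWord (2*k+3)) ++ [0,1] := by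
      rw [show 2*(k+1)+3 = (2*k+2) + 3 by ring, fib_rec,
        show 2*k+2+2 = 2*k+4 by ring, show 2*k+2+1 = 2*k+3 by ring, h1, List.append_assoc]
    have e2 : fibWord (2*(k+1)+4) = (fibWord (2*(k+1)+3) ++ centralWord (2*k+4)) ++ [1,0] := by
      rw [show 2*(k+1)+4 = (2*k+3) + 3 by ring, fib_rec,
        show 2*k+3+2 = 2*(k+1)+3 by ring, show 2*k+3+1 = 2*k+4 by ring, h2, List.append_assoc]
    have c1 : centralWord (2*(k+1)+3) = fibWord (2*k+4) ++ centralWord (2*k+3) := by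
      rw [centralWord, e1, show ([0,1] : List ℕ) = [0] ++ [1] from rfl, ← List.append_assoc,
        List.dropLast_concat, List.dropLast_concat]
    have c2 : centralWord (2*(k+1)+4) = fibWord (2*(k+1)+3) ++ centralWord (2*k+4) := by
      rw [centralWord, e2, show ([1,0] : List ℕ) = [1] ++ [0] from rfl, ← List.append_assoc,
        List.dropLast_concat, List.dropLast_concat]
    exact ⟨by rw [e1, c1], by rw [e2, c2]⟩

lemma fib_len2 (n : ℕ) : 2 ≤ (fibWord (n+3)).length := by
  rcases Nat.even_or_odd n with ⟨j, hj⟩ | ⟨j, hj⟩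
  · have := (lastTwo j).1
    rw [show n+3 = 2*j+3 by omega, this]; simp
  · have := (lastTwo j).2
    rw [show n+3 = 2*j+4 by omega, this]; simp

lemma sing_odd (m : ℕ) : singWord (2*m+3) = [0] ++ centralWord (2*m+3) ++ [0] := by
  have h := (lastTwo m).1
  rw [singWord, leftRot, h]
  rw [show centralWord (2*m+3) ++ [0,1] = (centralWord (2*m+3) ++ [0]) ++ [1] by
    simp [List.append_assoc]]
  rw [List.getLast?_concat, List.dropLast_concat]
  rfl

lemma sing_even (m : ℕ) : singWord (2*m+4) = [1] ++ centralWord (2*m+4) ++ [1] := by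
  have h := (lastTwo m).2
  rw [singWord, leftRot, h]
  rw [show centralWord (2*m+4) ++ [1,0] = (centralWord (2*m+4) ++ [1]) ++ [0] by
    simp [List.append_assoc]]
  rw [List.getLast?_concat, List.dropLast_concat]
  rfl

/-- swap lemma -/
lemma swap : ∀ m, (fibWord (m+2) ++ fibWord (m+1)).dropLast.dropLast
    = (fibWord (m+1) ++ fibWord (m+2)).dropLast.dropLast := by
  intro m
  induction m using Nat.strong_induction_on with
  | _ m ih =>
    match m with
    | 0 => rfl
    | 1 => rfl
    | (k+2) =>
      have len : ∀ u v : List ℕ, u ≠ [] → v ≠ [] → 2 ≤ (u ++ v).length := by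
        intro u v hu hv
        have := List.length_pos_iff.mpr hu
        have := List.length_pos_iff.mpr hv
        simp only [List.length_append]; omega
      have hne2 : fibWord (k+2) ≠ [] := fib_ne_nil _ (by omega)
      have hne3 : fibWord (k+3) ≠ [] := fib_ne_nil _ (by omega)
      have e1 : fibWord (k+2+2) ++ fibWord (k+2+1) =
          fibWord (k+3) ++ (fibWord (k+2) ++ fibWord (k+3)) := by
        rw [show k+2+2 = (k+1)+3 from rfl, fib_rec (k+1), List.append_assoc]
      have e2 : fibWord (k+2+1) ++ fibWord (k+2+2) =
          fibWord (k+3) ++ (fibWord (k+3) ++ fibWord (k+2)) := by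
        rw [show k+2+2 = (k+1)+3 from rfl, fib_rec (k+1)]
      rw [e1, e2, dl2_append _ _ (len _ _ hne2 hne3), dl2_append _ _ (len _ _ hne3 hne2),
        ← ih (k+1) (by omega)]

lemma cw1 (k : ℕ) : centralWord (k+5) = fibWord (k+4) ++ centralWord (k+3) := by
  rw [centralWord, show k+5 = (k+2)+3 from rfl, fib_rec (k+2),
    show k+2+2 = k+4 from rfl, show k+2+1 = k+3 from rfl,
    dl2_append _ _ (fib_len2 k)]
  rfl

lemma cw2 (k : ℕ) : centralWord (k+5) = fibWord (k+3) ++ centralWord (k+4) := by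
  rw [centralWord, show k+5 = (k+2)+3 from rfl, fib_rec (k+2),
    show k+2+2 = (k+2)+2 from rfl, show k+2+1 = (k+2)+1 from rfl, swap (k+2),
    show k+2+1 = k+3 from rfl, show k+2+2 = k+4 from rfl,
    dl2_append _ _ (fib_len2 (k+1))]
  rfl

/-- central words are palindromes -/
lemma central_palin : ∀ n, (centralWord n).reverse = centralWord n := by
  intro n
  induction n using Nat.strong_induction_on with
  | _ n ih =>
    match n with
    | 0 => rfl
    | 1 => rfl
    | 2 => rfl
    | 3 => rfl
    | 4 => rfl
    | (k+5) =>
      have i3 := ih (k+3) (by omega)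
      have i4 := ih (k+4) (by omega)
      rcases Nat.even_or_odd k with ⟨j, hj⟩ | ⟨j, hj⟩
      · have h4 : fibWord (k+4) = centralWord (k+4) ++ [1,0] := by
          rw [show k+4 = 2*j+4 by omega]; exact (lastTwo j).2
        have h3 : fibWord (k+3) = centralWord (k+3) ++ [0,1] := by
          rw [show k+3 = 2*j+3 by omega]; exact (lastTwo j).1
        conv_lhs => rw [cw1 k, h4]
        conv_rhs => rw [cw2 k, h3]
        simp [List.reverse_append, i3, i4, List.append_assoc]
      · have h4 : fibWord (k+4) = centralWord (k+4) ++ [0,1] := by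
          rw [show k+4 = 2*(j+1)+3 by omega]; exact (lastTwo (j+1)).1
        have h3 : fibWord (k+3) = centralWord (k+3) ++ [1,0] := by
          rw [show k+3 = 2*j+4 by omega]; exact (lastTwo j).2
        conv_lhs => rw [cw1 k, h4]
        conv_rhs => rw [cw2 k, h3]
        simp [List.reverse_append, i3, i4, List.append_assoc]

lemma sing_palin : ∀ m, (singWord m).reverse = singWord m := by
  intro m
  match m with
  | 0 => rfl
  | 1 => rfl
  | 2 => rfl
  | (k+3) =>
    rcases Nat.even_or_odd k with ⟨j, hj⟩ | ⟨j, hj⟩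
    · rw [show k+3 = 2*j+3 by omega, sing_odd]
      simp [List.reverse_append, central_palin]
    · rw [show k+3 = 2*j+4 by omega, sing_even]
      simp [List.reverse_append, central_palin]

theorem stmt11 (n : ℕ) (hn : 1 ≤ n) :
    chrisWord (2 * n + 1) = singWord (2 * n - 1) ++ singWord (2 * n) ∧
    chrisWord (2 * n + 2) = singWord (2 * n + 1) ++ singWord (2 * n) ∧
    (chrisWord (2 * n + 1)).reverse = singWord (2 * n) ++ singWord (2 * n - 1) ∧
    (chrisWord (2 * n + 2)).reverse = singWord (2 * n) ++ singWord (2 * n + 1) := by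
  have key1 : chrisWord (2*n+1) = singWord (2*n-1) ++ singWord (2*n) := by
    match n, hn with
    | 1, _ => rfl
    | (m+2), _ =>
      rw [show 2*(m+2)+1 = 2*m+5 by ring, show 2*(m+2)-1 = 2*m+3 by omega,
        show 2*(m+2) = 2*m+4 by ring, sing_odd m, sing_even m, chrisWord,
        cw2 (2*m), show 2*m+3 = 2*m+3 from rfl, (lastTwo m).1]
      simp [List.append_assoc]
  have key2 : chrisWord (2*n+2) = singWord (2*n+1) ++ singWord (2*n) := by
    match n, hn with
    | 1, _ => rfl
    | (m+2), _ =>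
      rw [show 2*(m+2)+2 = (2*m+1)+5 by ring, show 2*(m+2)+1 = 2*(m+1)+3 by ring,
        show 2*(m+2) = 2*m+4 by ring, sing_odd (m+1), sing_even m, chrisWord,
        cw1 (2*m+1), show 2*m+1+4 = 2*(m+1)+3 by ring, (lastTwo (m+1)).1,
        show 2*m+1+3 = 2*m+4 by ring]
      simp [List.append_assoc]
  exact ⟨key1, key2,
    by rw [key1, List.reverse_append, sing_palin, sing_palin],
    by rw [key2, List.reverse_append, sing_palin, sing_palin]⟩
end

section
/- For every N ≥ 2, the concatenation rev(f_4)·rev(f_6)⋯rev(f_{2N}) of the reversals of the even-indexed finite Fibonacci words is a prefix of the Fibonacci infinite word f. In other words, f = ∏_{n≥2} rev(f_{2n}) (de Luca's factorization). -/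
/-- The two-letter suffix words, alternating with parity. -/
def sw (k : ℕ) : List ℕ := if k % 2 = 0 then [1, 0] else [0, 1]

/-- The palindromic prefixes: `pal k` is `fibWord (k+3)` with its last two
letters removed. -/
def pal : ℕ → List ℕ
  | 0 => []
  | 1 => [0]
  | n + 2 => pal (n + 1) ++ sw n ++ pal n

lemma sw_rev (k : ℕ) : (sw k).reverse = sw (k + 1) := by
  rcases Nat.mod_two_eq_zero_or_one k with h | h <;>
    simp [sw, h, Nat.add_mod]

lemma sw_two (k : ℕ) : sw (k + 2) = sw k := by
  simp [sw, Nat.add_mod]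

lemma pal_conj : ∀ k, pal (k + 1) ++ sw k ++ pal k = pal k ++ (sw k).reverse ++ pal (k + 1) := by
  intro k
  induction k with
  | zero => simp [pal, sw]
  | succ n ih =>
    have h2 : pal (n + 2) = pal n ++ (sw n).reverse ++ pal (n + 1) := by
      rw [show pal (n + 2) = pal (n + 1) ++ sw n ++ pal n from rfl, ih]
    calc pal (n + 2) ++ sw (n + 1) ++ pal (n + 1)
        = (pal (n + 1) ++ sw n ++ pal n) ++ (sw n).reverse ++ pal (n + 1) := by
          rw [show pal (n + 2) = pal (n + 1) ++ sw n ++ pal n from rfl, sw_rev]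
      _ = pal (n + 1) ++ sw n ++ (pal n ++ (sw n).reverse ++ pal (n + 1)) := by
          simp [List.append_assoc]
      _ = pal (n + 1) ++ (sw (n + 1)).reverse ++ pal (n + 2) := by
          rw [h2, show (sw (n + 1)).reverse = sw n from (sw_rev (n+1)).trans (sw_two n)]

lemma pal_palindrome : ∀ k, (pal k).reverse = pal k := by
  intro k
  induction k using Nat.twoStepInduction with
  | zero => simp [pal]
  | one => simp [pal]
  | more n ih1 ih2 =>
    show (pal (n + 1) ++ sw n ++ pal n).reverse = pal (n + 2)
    rw [List.reverse_append, List.reverse_append, ih1, ih2, sw_rev]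
    rw [show pal (n + 2) = pal (n + 1) ++ sw n ++ pal n from rfl, pal_conj n, sw_rev]
    simp [List.append_assoc]

lemma fib_eq_pal : ∀ k, fibWord (k + 3) = pal k ++ (sw k).reverse := by
  intro k
  induction k using Nat.twoStepInduction with
  | zero => simp [fibWord, pal, sw]
  | one => simp [fibWord, pal, sw]
  | more n ih1 ih2 =>
    show fibWord (n + 4) ++ fibWord (n + 3) = pal (n + 2) ++ (sw (n + 2)).reverse
    rw [ih1, ih2, show pal (n + 2) = pal (n + 1) ++ sw n ++ pal n from rfl,
      show (sw (n + 1)).reverse = sw n from (sw_rev (n+1)).trans (sw_two n),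
      show (sw (n + 2)).reverse = (sw n).reverse from by rw [sw_two]]
    simp [List.append_assoc]

lemma rev_fib (k : ℕ) : (fibWord (k + 3)).reverse = sw k ++ pal k := by
  rw [fib_eq_pal, List.reverse_append, List.reverse_reverse, pal_palindrome]

lemma main_eq : ∀ M, (((List.range (M + 1)).map
    (fun i => (fibWord (2 * (i + 2))).reverse)).flatten) = pal (2 * M + 2) := by
  intro M
  induction M with
  | zero =>
    simp [List.range_succ]
    rw [show (4 : ℕ) = 1 + 3 from rfl, rev_fib]
    simp [pal, sw]
  | succ n ih =>
    rw [List.range_succ, List.map_append, List.flatten_append, ih]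
    simp only [List.map_cons, List.map_nil, List.flatten_cons, List.flatten_nil,
      List.append_nil]
    rw [show 2 * (n + 1 + 2) = (2 * n + 3) + 3 by ring, rev_fib]
    rw [show 2 * (n + 1) + 2 = (2 * n + 2) + 2 by ring,
      show pal (2 * n + 2 + 2) = pal (2 * n + 3) ++ sw (2 * n + 2) ++ pal (2 * n + 2) from rfl,
      pal_conj, sw_rev]
    simp [List.append_assoc]

theorem stmt17 (N : ℕ) (hN : 2 ≤ N) :
    IsFibPrefix (((List.range (N - 1)).map
      (fun i => (fibWord (2 * (i + 2))).reverse)).flatten) := by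
  obtain ⟨M, rfl⟩ : ∃ M, N = M + 2 := ⟨N - 2, by omega⟩
  rw [show M + 2 - 1 = M + 1 from rfl, main_eq]
  exact ⟨2 * M + 2 + 3, by omega, fib_eq_pal (2 * M + 2) ▸ ⟨(sw (2 * M + 2)).reverse, rfl⟩⟩
end

section
/- For every N ≥ 2, the word 0·rev(f_5)·rev(f_7)⋯rev(f_{2N+1}) (the letter 0 followed by the concatenation of the reversals of the odd-indexed finite Fibonacci words) is a prefix of the Fibonacci infinite word f. In other words, f = 0·∏_{n≥2} rev(f_{2n+1}). -/
def dw (n : ℕ) : List ℕ := if n % 2 = 0 then [0,1] else [1,0]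

def cw : ℕ → List ℕ
  | 0 => []
  | 1 => [0]
  | n + 2 => cw (n+1) ++ dw (n+1) ++ cw n

lemma dw_two (n : ℕ) : dw (n+2) = dw n := by
  simp [dw, Nat.add_mod]

lemma dw_rev (n : ℕ) : (dw n).reverse = dw (n+1) := by
  rcases Nat.mod_two_eq_zero_or_one n with h | h <;>
    simp [dw, h, Nat.add_mod]

lemma fib_eq : ∀ n, fibWord (n+3) = cw n ++ dw n := by
  intro n
  induction n using Nat.twoStepInduction with
  | zero => decide
  | one => decide
  | more n ih1 ih2 =>
    show fibWord (n+2+3) = _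
    rw [fibWord]
    show fibWord (n+1+3) ++ fibWord (n+3) = _
    rw [ih1, ih2]
    show _ = cw (n+1) ++ dw (n+1) ++ cw n ++ dw (n+2)
    rw [dw_two]
    simp [List.append_assoc]

lemma cw_comm : ∀ n, cw n ++ (dw n ++ cw (n+1)) = cw (n+1) ++ (dw (n+1) ++ cw n) := by
  intro n
  induction n with
  | zero => decide
  | succ n ih =>
    show cw (n+1) ++ (dw (n+1) ++ cw (n+2)) = cw (n+2) ++ (dw (n+2) ++ cw (n+1))
    rw [dw_two]
    show cw (n+1) ++ (dw (n+1) ++ (cw (n+1) ++ dw (n+1) ++ cw n))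
        = cw (n+1) ++ dw (n+1) ++ cw n ++ (dw n ++ cw (n+1))
    simp only [List.append_assoc]
    rw [ih]

lemma cw_pal : ∀ n, (cw n).reverse = cw n := by
  intro n
  induction n using Nat.twoStepInduction with
  | zero => decide
  | one => decide
  | more n ih1 ih2 =>
    show (cw (n+1) ++ dw (n+1) ++ cw n).reverse = cw (n+2)
    rw [List.reverse_append, List.reverse_append, ih1, ih2, dw_rev, dw_two]
    show cw n ++ (dw n ++ cw (n+1)) = cw (n+1) ++ dw (n+1) ++ cw n
    rw [cw_comm]
    simp [List.append_assoc]

lemma fib_rev (n : ℕ) : (fibWord (n+3)).reverse = dw (n+1) ++ cw n := by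
  rw [fib_eq, List.reverse_append, dw_rev, cw_pal]

lemma main : ∀ k, 1 ≤ k →
    [0] ++ ((List.range k).map (fun i => (fibWord (2 * (i + 2) + 1)).reverse)).flatten
      = cw (2*k+1) := by
  intro k hk
  induction k with
  | zero => omega
  | succ k ih =>
    rcases Nat.eq_or_lt_of_le hk with h | h
    · simp only [← h]
      decide
    · have hk1 : 1 ≤ k := by omega
      rw [List.range_succ, List.map_append, List.flatten_append, ← List.append_assoc, ih hk1]
      simp only [List.map_cons, List.map_nil, List.flatten_cons, List.flatten_nil,
        List.append_nil]
      have h1 : 2 * (k + 2) + 1 = (2*k+2) + 3 := by ring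
      rw [h1, fib_rev]
      have h2 : (2*k+2) + 1 = (2*k+1) + 2 := by ring
      rw [h2, dw_two]
      have h3 : 2*(k+1)+1 = (2*k+1) + 2 := by ring
      rw [h3]
      show cw (2*k+1) ++ (dw (2*k+1) ++ cw (2*k+1+1)) = cw (2*k+1+2)
      rw [cw_comm]
      show _ = cw (2*k+1+1) ++ dw (2*k+1+1) ++ cw (2*k+1)
      simp [List.append_assoc]

theorem stmt18 (N : ℕ) (hN : 2 ≤ N) :
    IsFibPrefix ([0] ++
      ((List.range (N - 1)).map (fun i => (fibWord (2 * (i + 2) + 1)).reverse)).flatten) := by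
  obtain ⟨k, rfl⟩ : ∃ k, N = k + 2 := ⟨N - 2, by omega⟩
  refine ⟨2*k+6, by omega, ?_⟩
  have h1 : k + 2 - 1 = k + 1 := by omega
  rw [h1, main (k+1) (by omega)]
  have h2 : 2*k+6 = (2*k+3) + 3 := by ring
  have h3 : 2*(k+1)+1 = 2*k+3 := by ring
  rw [h2, h3, fib_eq]
  exact ⟨dw (2*k+3), rfl⟩
end
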